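/- Let κ ∈ ℝ and a < b be reals. Let u : [a,b] → ℝ satisfy the κ-concavity inequality on [a,b]: for all x, y ∈ [a,b] with 0 < y − x (and additionally (y−x)·√κ < π if κ > 0) and all t ∈ [0,1], u((1−t)x + t y) ≥ (sin_κ((1−t)(y−x))/sin_κ(y−x))·u(x) + (sin_κ(t(y−x))/sin_κ(y−x))·u(y). Then for every twice differentiable function F : (a,b) → ℝ with F''(x) = −κ·u(x) for all x ∈ (a,b), the function u − F is concave on (a,b). -/

import Mathlib

open Real Set

open Filter Topology

/-- The generalized sine function `sin_κ`. -/
noncomputable def sinK (κ x : ℝ) : ℝ :=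
  if κ < 0 then Real.sinh (Real.sqrt (-κ) * x) / Real.sqrt (-κ)
  else if κ = 0 then x
  else Real.sin (Real.sqrt κ * x) / Real.sqrt κ

/-- `u` satisfies the κ-concavity inequality (`u'' + κ u ≤ 0`) on the set `s`. -/
def KConcIneqOn (κ : ℝ) (u : ℝ → ℝ) (s : Set ℝ) : Prop :=
  ∀ x ∈ s, ∀ y ∈ s, 0 < y - x → (0 < κ → (y - x) * Real.sqrt κ < Real.pi) →
    ∀ t ∈ Set.Icc (0:ℝ) 1,
      u ((1 - t) * x + t * y) ≥
        (sinK κ ((1 - t) * (y - x)) / sinK κ (y - x)) * u x +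
        (sinK κ (t * (y - x)) / sinK κ (y - x)) * u y

lemma sinK_pos (κ : ℝ) {d : ℝ} (hd : 0 < d) (hπ : 0 < κ → d * Real.sqrt κ < Real.pi) :
    0 < sinK κ d := by
  unfold sinK
  split_ifs with h1 h2
  · have hs : 0 < Real.sqrt (-κ) := Real.sqrt_pos.2 (by linarith)
    exact div_pos (Real.sinh_pos_iff.2 (by positivity)) hs
  · exact hd
  · have hκ : 0 < κ := lt_of_le_of_ne (not_lt.1 h1) (Ne.symm h2)
    have hs : 0 < Real.sqrt κ := Real.sqrt_pos.2 hκ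
    refine div_pos (Real.sin_pos_of_pos_of_lt_pi (by positivity) ?_) hs
    have := hπ hκ; linarith [this, mul_comm d (Real.sqrt κ)]

lemma sinK_zero (κ : ℝ) : sinK κ 0 = 0 := by
  unfold sinK; split_ifs <;> simp

lemma continuous_sinK (κ : ℝ) : Continuous (sinK κ) := by
  unfold sinK
  split_ifs with h1 h2
  · exact (Real.continuous_sinh.comp (continuous_const.mul continuous_id)).div_const _
  · exact continuous_id
  · exact (Real.continuous_sin.comp (continuous_const.mul continuous_id)).div_const _

/-- one-sided comparison bound: `u w ≥ (sinK (y₁-w) u p + sinK (w-p) u y₁)/sinK (y₁-p)` on `[p,y₁]`. -/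
lemma comp_bound (κ a b : ℝ) (u : ℝ → ℝ) (hu : KConcIneqOn κ u (Set.Icc a b))
    {p y₁ : ℝ} (hp : p ∈ Set.Icc a b) (hy₁ : y₁ ∈ Set.Icc a b) (hpy : p < y₁)
    (hπ : 0 < κ → (y₁ - p) * Real.sqrt κ < Real.pi) :
    ∀ w ∈ Set.Icc p y₁,
      (sinK κ (y₁ - w) * u p + sinK κ (w - p) * u y₁) / sinK κ (y₁ - p) ≤ u w := by
  intro w hw
  have hd : 0 < y₁ - p := by linarith [hpy]
  set t := (w - p) / (y₁ - p) with ht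
  have ht0 : 0 ≤ t := div_nonneg (by linarith [hw.1]) hd.le
  have ht1 : t ≤ 1 := (div_le_one hd).2 (by linarith [hw.2])
  have key := hu p hp y₁ hy₁ hd hπ t ⟨ht0, ht1⟩
  have e0 : (1 - t) * p + t * y₁ = w := by
    have e2' : t * (y₁ - p) = w - p := by rw [ht]; exact div_mul_cancel₀ _ hd.ne'
    linear_combination e2'
  have e2 : t * (y₁ - p) = w - p := by rw [ht]; exact div_mul_cancel₀ _ hd.ne'
  have e1 : (1 - t) * (y₁ - p) = y₁ - w := by rw [sub_mul, one_mul, e2]; ring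
  rw [e0, e1, e2] at key
  calc (sinK κ (y₁ - w) * u p + sinK κ (w - p) * u y₁) / sinK κ (y₁ - p)
      = sinK κ (y₁ - w) / sinK κ (y₁ - p) * u p + sinK κ (w - p) / sinK κ (y₁ - p) * u y₁ := by
        ring
    _ ≤ u w := key


lemma lsc_aux (κ a b : ℝ) (u : ℝ → ℝ) (hu : KConcIneqOn κ u (Set.Icc a b))
    {p : ℝ} (hp : p ∈ Set.Ioo a b) :
    LowerSemicontinuousAt u p := by
  intro c hc
  set r : ℝ := if h : 0 < κ then min 1 (Real.pi / (2 * Real.sqrt κ)) else 1 with hr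
  have hrpos : 0 < r := by
    rw [hr]; split_ifs with h
    · exact lt_min one_pos (by positivity)
    · exact one_pos
  have hrπ : ∀ d : ℝ, 0 < d → d ≤ r → (0 < κ → d * Real.sqrt κ < Real.pi) := by
    intro d hd hdr hκ
    have hs : 0 < Real.sqrt κ := Real.sqrt_pos.2 hκ
    have h1 : r ≤ Real.pi / (2 * Real.sqrt κ) := by
      rw [hr, dif_pos hκ]; exact min_le_right _ _
    have hd2 : d ≤ Real.pi / (2 * Real.sqrt κ) := le_trans hdr h1
    have h3 : d * Real.sqrt κ ≤ Real.pi / 2 := by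
      have := mul_le_mul_of_nonneg_right hd2 hs.le
      calc d * Real.sqrt κ ≤ Real.pi / (2 * Real.sqrt κ) * Real.sqrt κ := this
        _ = Real.pi / 2 := by field_simp
    linarith [Real.pi_pos]
  set y₁ := min b (p + r) with hy₁def
  have hpy₁ : p < y₁ := lt_min hp.2 (by linarith)
  have hy₁b : y₁ ∈ Set.Icc a b := ⟨by linarith [hp.1], min_le_left _ _⟩
  have hd1 : y₁ - p ≤ r := by
    have := min_le_right b (p + r); rw [← hy₁def] at this; linarith
  have hcompR := comp_bound κ a b u hu ⟨hp.1.le, hp.2.le⟩ hy₁b hpy₁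
    (hrπ (y₁ - p) (by linarith) hd1)
  set x₁ := max a (p - r) with hx₁def
  have hx₁p : x₁ < p := max_lt hp.1 (by linarith)
  have hx₁b : x₁ ∈ Set.Icc a b := ⟨le_max_left _ _, by linarith [hp.2]⟩
  have hd2 : p - x₁ ≤ r := by
    have := le_max_right a (p - r); rw [← hx₁def] at this; linarith
  have hcompL := comp_bound κ a b u hu hx₁b ⟨hp.1.le, hp.2.le⟩ hx₁p
    (hrπ (p - x₁) (by linarith) hd2)
  set fR : ℝ → ℝ := fun w => (sinK κ (y₁ - w) * u p + sinK κ (w - p) * u y₁) / sinK κ (y₁ - p)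
    with hfRdef
  set fL : ℝ → ℝ := fun w => (sinK κ (p - w) * u x₁ + sinK κ (w - x₁) * u p) / sinK κ (p - x₁)
    with hfLdef
  have hsinR : 0 < sinK κ (y₁ - p) := sinK_pos κ (by linarith) (hrπ (y₁ - p) (by linarith) hd1)
  have hsinL : 0 < sinK κ (p - x₁) := sinK_pos κ (by linarith) (hrπ (p - x₁) (by linarith) hd2)
  have hfRp : fR p = u p := by
    rw [hfRdef]; simp only [sub_self, sinK_zero]
    field_simp
    ring
  have hfLp : fL p = u p := by
    rw [hfLdef]; simp only [sub_self, sinK_zero]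
    field_simp
    ring
  have hfRcont : Continuous fR := by
    rw [hfRdef]
    exact ((((continuous_sinK κ).comp (continuous_const.sub continuous_id)).mul
      continuous_const).add (((continuous_sinK κ).comp
      (continuous_id.sub continuous_const)).mul continuous_const)).div_const _
  have hfLcont : Continuous fL := by
    rw [hfLdef]
    exact ((((continuous_sinK κ).comp (continuous_const.sub continuous_id)).mul
      continuous_const).add (((continuous_sinK κ).comp
      (continuous_id.sub continuous_const)).mul continuous_const)).div_const _
  have hevR : ∀ᶠ w in nhds p, c < fR w := by
    have : fR ⁻¹' Set.Ioi c ∈ nhds p :=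
      hfRcont.continuousAt.preimage_mem_nhds (Ioi_mem_nhds (by rw [hfRp]; exact hc))
    filter_upwards [this] with w hw using hw
  have hevL : ∀ᶠ w in nhds p, c < fL w := by
    have : fL ⁻¹' Set.Ioi c ∈ nhds p :=
      hfLcont.continuousAt.preimage_mem_nhds (Ioi_mem_nhds (by rw [hfLp]; exact hc))
    filter_upwards [this] with w hw using hw
  have hevI : ∀ᶠ w in nhds p, w ∈ Set.Ioo x₁ y₁ := Ioo_mem_nhds hx₁p hpy₁
  filter_upwards [hevR, hevL, hevI] with w h1 h2 h3
  rcases le_or_gt p w with hpw | hwp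
  · exact lt_of_lt_of_le h1 (hcompR w ⟨hpw, h3.2.le⟩)
  · exact lt_of_lt_of_le h2 (hcompL w ⟨h3.1.le, hwp.le⟩)

lemma exists_min_lsc {s : Set ℝ} (hs : IsCompact s) (hne : s.Nonempty) {f : ℝ → ℝ}
    (hf : ∀ p ∈ s, LowerSemicontinuousWithinAt f s p) :
    ∃ p ∈ s, ∀ w ∈ s, f p ≤ f w := by
  by_cases hbd : BddBelow (f '' s)
  · set m := sInf (f '' s) with hm
    have hseq : ∀ n : ℕ, ∃ z ∈ s, f z < m + 1 / (n + 1) := by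
      intro n
      have hpos : (0:ℝ) < 1 / (n + 1) := by positivity
      obtain ⟨A, ⟨z, hz, rfl⟩, hA⟩ := exists_lt_of_csInf_lt (hne.image f)
        (lt_add_of_pos_right m hpos)
      exact ⟨z, hz, hA⟩
    choose z hz hz' using hseq
    obtain ⟨p, hpmem, φ, hφ, hconv⟩ := hs.tendsto_subseq hz
    refine ⟨p, hpmem, ?_⟩
    have hfp : f p ≤ m := by
      by_contra hcon
      push_neg at hcon
      set c := (m + f p) / 2 with hcdef
      have hcm : m < c := by rw [hcdef]; linarith
      have hcf : c < f p := by rw [hcdef]; linarith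
      have hconv' : Tendsto (fun n => z (φ n)) atTop (nhdsWithin p s) :=
        tendsto_nhdsWithin_of_tendsto_nhds_of_eventually_within _ hconv
          (Filter.Eventually.of_forall fun n => hz (φ n))
      have hev := hconv'.eventually (hf p hpmem c hcf)
      have hev2 : ∀ᶠ n : ℕ in atTop, f (z (φ n)) < c := by
        have htd : Tendsto (fun n : ℕ => m + 1 / ((φ n : ℝ) + 1)) atTop (nhds m) := by
          have : Tendsto (fun n : ℕ => ((φ n : ℝ) + 1)) atTop atTop :=
            tendsto_atTop_add_const_right _ 1
              (tendsto_natCast_atTop_atTop.comp hφ.tendsto_atTop)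
          simpa using (tendsto_const_nhds (x := m)).add (this.inv_tendsto_atTop)
        filter_upwards [htd.eventually (eventually_lt_nhds hcm)] with n hn
        exact lt_trans (hz' (φ n)) hn
      obtain ⟨n, h1, h2⟩ := (hev.and hev2).exists
      linarith
    exact fun w hw => le_trans hfp (csInf_le hbd ⟨w, hw, rfl⟩)
  · exfalso
    have hseq : ∀ n : ℕ, ∃ z ∈ s, f z < -n := by
      intro n
      rw [bddBelow_def] at hbd
      push_neg at hbd
      obtain ⟨A, ⟨z, hz, rfl⟩, hA⟩ := hbd (-n)
      exact ⟨z, hz, hA⟩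
    choose z hz hz' using hseq
    obtain ⟨p, hpmem, φ, hφ, hconv⟩ := hs.tendsto_subseq hz
    have hconv' : Tendsto (fun n => z (φ n)) atTop (nhdsWithin p s) :=
      tendsto_nhdsWithin_of_tendsto_nhds_of_eventually_within _ hconv
        (Filter.Eventually.of_forall fun n => hz (φ n))
    have hev := hconv'.eventually (hf p hpmem (f p - 1) (by linarith))
    have hev2 : ∀ᶠ n : ℕ in atTop, f (z (φ n)) < f p - 1 := by
      have htd : Tendsto (fun n : ℕ => -((φ n : ℝ))) atTop atBot := by
        exact tendsto_neg_atBot_iff.2 (tendsto_natCast_atTop_atTop.comp hφ.tendsto_atTop)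
      filter_upwards [htd.eventually (eventually_lt_atBot (f p - 1))] with n hn
      exact lt_trans (hz' (φ n)) hn
    obtain ⟨n, h1, h2⟩ := (hev.and hev2).exists
    linarith

lemma secondDiff_tendsto {F F' : ℝ → ℝ} {p L δ₀ : ℝ} (hδ₀ : 0 < δ₀)
    (hF : ∀ w ∈ Set.Ioo (p - δ₀) (p + δ₀), HasDerivAt F (F' w) w)
    (hF' : HasDerivAt F' L p) :
    Tendsto (fun h => (F (p + h) + F (p - h) - 2 * F p - L * h ^ 2) / h ^ 2)
      (nhdsWithin 0 (Set.Ioi 0)) (nhds 0) := by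
  rw [Metric.tendsto_nhds]
  intro ε hε
  have hlo := (hasDerivAt_iff_isLittleO.1 hF').def (show (0:ℝ) < ε/4 by positivity)
  rw [Metric.eventually_nhds_iff] at hlo
  obtain ⟨δ, hδpos, hδ⟩ := hlo
  set η := min (δ / 2) (δ₀ / 2) with hη
  have hηpos : 0 < η := lt_min (by positivity) (by positivity)
  have hmem : Set.Ioo (0:ℝ) η ∈ nhdsWithin (0:ℝ) (Set.Ioi 0) :=
    Ioo_mem_nhdsGT hηpos
  filter_upwards [hmem] with h hh
  obtain ⟨hh0, hhη⟩ := hh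
  -- the one-variable function
  set Φ : ℝ → ℝ := fun t => F (p + t) + F (p - t) - 2 * F p - L * t ^ 2 with hΦ
  set Φ' : ℝ → ℝ := fun t => F' (p + t) - F' (p - t) - L * (2 * t) with hΦ'
  have hmemt : ∀ t ∈ Set.Icc (0:ℝ) h, (p + t) ∈ Set.Ioo (p - δ₀) (p + δ₀) ∧
      (p - t) ∈ Set.Ioo (p - δ₀) (p + δ₀) := by
    intro t ht
    have h1 : t < δ₀ := by
      have : η ≤ δ₀ / 2 := min_le_right _ _
      have := ht.2; linarith
    have := ht.1
    constructor <;> constructor <;> linarith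
  have hΦd : ∀ t ∈ Set.Icc (0:ℝ) h, HasDerivWithinAt Φ (Φ' t) (Set.Icc 0 h) t := by
    intro t ht
    have hin1 : HasDerivAt (fun s : ℝ => p + s) 1 t := by
      simpa using (hasDerivAt_id' t).const_add p
    have hin2 : HasDerivAt (fun s : ℝ => p - s) (-1) t := by
      simpa using (hasDerivAt_id' t).const_sub p
    have h1 : HasDerivAt (fun s => F (p + s)) (F' (p + t) * 1) t :=
      HasDerivAt.comp t (hF (p + t) (hmemt t ht).1) hin1
    have h2 : HasDerivAt (fun s => F (p - s)) (F' (p - t) * (-1)) t :=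
      HasDerivAt.comp t (hF (p - t) (hmemt t ht).2) hin2
    have h3 : HasDerivAt (fun s : ℝ => L * s ^ 2) (L * (2 * t)) t := by
      have := (hasDerivAt_pow 2 t).const_mul L
      simpa using this
    have h4 : HasDerivAt Φ (F' (p + t) * 1 + F' (p - t) * (-1) - 0 - L * (2 * t)) t :=
      ((h1.add h2).sub (hasDerivAt_const t (2 * F p))).sub h3
    have he : F' (p + t) * 1 + F' (p - t) * (-1) - 0 - L * (2 * t) = Φ' t := by
      show _ = F' (p + t) - F' (p - t) - L * (2 * t); ring
    rw [he] at h4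
    exact h4.hasDerivWithinAt
  have hbound : ∀ t ∈ Set.Icc (0:ℝ) h, ‖Φ' t‖ ≤ ε / 2 * h := by
    intro t ht
    have htδ : t < δ := by
      have : η ≤ δ / 2 := min_le_left _ _
      have := ht.2; linarith
    have e1 := hδ (y := p + t) (by rw [Real.dist_eq]; rw [abs_of_nonneg] <;> [skip; linarith [ht.1]]; simpa using htδ)
    have e2 := hδ (y := p - t) (by rw [Real.dist_eq]; rw [show p - t - p = -t by ring, abs_neg, abs_of_nonneg ht.1]; exact htδ)
    simp only [Real.norm_eq_abs] at e1 e2 ⊢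
    rw [show p + t - p = t by ring] at e1
    rw [show p - t - p = -t by ring] at e2
    rw [abs_of_nonneg ht.1] at e1
    rw [abs_neg, abs_of_nonneg ht.1] at e2
    have : |Φ' t| ≤ |F' (p + t) - F' p - t • L| + |F' (p - t) - F' p - (-t) • L| := by
      have heq : Φ' t = (F' (p + t) - F' p - t • L) - (F' (p - t) - F' p - (-t) • L) := by
        show F' (p + t) - F' (p - t) - L * (2 * t) = _
        simp only [smul_eq_mul]; ring
      rw [heq]
      exact abs_sub _ _
    have ht2 : t ≤ h := ht.2
    calc |Φ' t| ≤ |F' (p + t) - F' p - t • L| + |F' (p - t) - F' p - (-t) • L| := this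
      _ ≤ ε / 4 * t + ε / 4 * t := add_le_add e1 e2
      _ ≤ ε / 2 * h := by nlinarith
  have hmvt := Convex.norm_image_sub_le_of_norm_hasDerivWithin_le hΦd hbound
    (convex_Icc 0 h) (Set.left_mem_Icc.2 hh0.le) (Set.right_mem_Icc.2 hh0.le)
  have hΦ0 : Φ 0 = 0 := by show F (p+0) + F (p-0) - 2*F p - L*0^2 = 0; simp; ring
  rw [hΦ0, sub_zero, Real.norm_eq_abs, Real.norm_eq_abs, sub_zero, abs_of_nonneg hh0.le] at hmvt
  have hΦh : |Φ h| ≤ ε / 2 * h ^ 2 := by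
    calc |Φ h| ≤ ε / 2 * h * h := hmvt
      _ = ε / 2 * h ^ 2 := by ring
  rw [Real.dist_eq, sub_zero]
  have hh2 : (0:ℝ) < h ^ 2 := by positivity
  rw [abs_div, abs_of_pos hh2]
  rw [div_lt_iff₀ hh2]
  calc |Φ h| ≤ ε / 2 * h ^ 2 := hΦh
    _ < ε * h ^ 2 := by nlinarith

lemma tendsto_sin_div_self : Tendsto (fun x : ℝ => Real.sin x / x) (𝓝[≠] 0) (𝓝 1) := by
  have h := hasDerivAt_iff_tendsto_slope.1 (Real.hasDerivAt_sin 0)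
  rw [Real.cos_zero] at h
  refine h.congr fun x => ?_
  simp [slope_fun_def, Real.sin_zero]
  ring

lemma tendsto_sinh_div_self : Tendsto (fun x : ℝ => Real.sinh x / x) (𝓝[≠] 0) (𝓝 1) := by
  have h := hasDerivAt_iff_tendsto_slope.1 (Real.hasDerivAt_sinh 0)
  rw [Real.cosh_zero] at h
  refine h.congr fun x => ?_
  simp [slope_fun_def, Real.sinh_zero]
  ring

lemma tendsto_scaled {s : ℝ} (hs : 0 < s) :
    Tendsto (fun h : ℝ => s * h / 2) (𝓝[>] (0:ℝ)) (𝓝[≠] (0:ℝ)) := by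
  rw [tendsto_nhdsWithin_iff]
  constructor
  · have : Tendsto (fun h : ℝ => s * h / 2) (𝓝 0) (𝓝 (s * 0 / 2)) :=
      ((continuous_const.mul continuous_id).div_const 2).tendsto 0
    simpa using this.mono_left nhdsWithin_le_nhds
  · filter_upwards [self_mem_nhdsWithin] with h (hh : 0 < h)
    have : 0 < s * h / 2 := by positivity
    exact this.ne'

lemma tendsto_scaled' {s : ℝ} (hs : 0 < s) :
    Tendsto (fun h : ℝ => s * h) (𝓝[>] (0:ℝ)) (𝓝 (0:ℝ)) := by
  have : Tendsto (fun h : ℝ => s * h) (𝓝 0) (𝓝 (s * 0)) :=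
    (continuous_const.mul continuous_id).tendsto 0
  simpa using this.mono_left nhdsWithin_le_nhds

lemma tendsto_coeff (κ : ℝ) :
    Tendsto (fun h => (1 - 2 * (sinK κ h / sinK κ (2 * h))) / h ^ 2)
      (𝓝[>] (0:ℝ)) (𝓝 (-κ / 2)) := by
  rcases lt_trichotomy κ 0 with hκ | hκ | hκ
  · -- κ < 0
    set s := Real.sqrt (-κ) with hs
    have hspos : 0 < s := Real.sqrt_pos.2 (by linarith)
    have hs2 : s ^ 2 = -κ := Real.sq_sqrt (by linarith)
    have hT1 : Tendsto (fun h : ℝ => Real.sinh (s * h / 2) / (s * h / 2)) (𝓝[>] (0:ℝ)) (𝓝 1) :=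
      tendsto_sinh_div_self.comp (tendsto_scaled hspos)
    have hT2 : Tendsto (fun h : ℝ => Real.cosh (s * h)) (𝓝[>] (0:ℝ)) (𝓝 1) := by
      have := (Real.continuous_cosh.tendsto 0).comp (tendsto_scaled' hspos)
      simpa [Function.comp_def] using this
    have hT : Tendsto (fun h : ℝ =>
        ((s / 2) * (Real.sinh (s * h / 2) / (s * h / 2))) ^ 2 * 2 / Real.cosh (s * h))
        (𝓝[>] (0:ℝ)) (𝓝 (((s / 2) * 1) ^ 2 * 2 / 1)) :=
      ((((tendsto_const_nhds.mul hT1).pow 2).mul_const 2).div hT2 one_ne_zero)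
    have hval : ((s / 2) * 1) ^ 2 * 2 / 1 = -κ / 2 := by
      field_simp
      nlinarith [hs2]
    rw [hval] at hT
    refine hT.congr' ?_
    filter_upwards [self_mem_nhdsWithin] with h (hh : 0 < h)
    have hsh : 0 < s * h := by positivity
    have hsinh : Real.sinh (s * h) ≠ 0 := (Real.sinh_pos_iff.2 hsh).ne'
    have hcosh : (0:ℝ) < Real.cosh (s * h) := Real.cosh_pos _
    have e1 : sinK κ h = Real.sinh (s * h) / s := by
      unfold sinK; rw [if_pos hκ]
    have e2 : sinK κ (2 * h) = 2 * Real.sinh (s * h) * Real.cosh (s * h) / s := by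
      unfold sinK; rw [if_pos hκ, show s * (2 * h) = 2 * (s * h) by ring, Real.sinh_two_mul]
    have e3 : Real.cosh (s * h) = 1 + 2 * Real.sinh (s * h / 2) ^ 2 := by
      rw [show s * h = 2 * (s * h / 2) by ring, Real.cosh_two_mul, Real.cosh_sq]
      ring
    have hne : s * h / 2 ≠ 0 := by positivity
    have hC : (0:ℝ) < 1 + 2 * Real.sinh (s * h / 2) ^ 2 := by positivity
    rw [e1, e2, e3]
    field_simp
    ring
  · -- κ = 0
    subst hκ
    have : ∀ h ∈ Set.Ioi (0:ℝ), (1 - 2 * (sinK 0 h / sinK 0 (2 * h))) / h ^ 2 = 0 := by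
      intro h (hh : 0 < h)
      have e1 : sinK 0 h = h := by unfold sinK; norm_num
      have e2 : sinK 0 (2 * h) = 2 * h := by unfold sinK; norm_num [mul_comm]
      rw [e1, e2]
      rw [show h / (2 * h) = 1 / 2 by rw [div_eq_iff (by positivity : (2*h:ℝ) ≠ 0)]; ring]
      norm_num
    rw [show -(0:ℝ) / 2 = 0 by norm_num]
    refine Tendsto.congr' ?_ tendsto_const_nhds
    filter_upwards [self_mem_nhdsWithin] with h hh
    exact (this h hh).symm
  · -- κ > 0
    set s := Real.sqrt κ with hs
    have hspos : 0 < s := Real.sqrt_pos.2 hκ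
    have hs2 : s ^ 2 = κ := Real.sq_sqrt hκ.le
    have hT1 : Tendsto (fun h : ℝ => Real.sin (s * h / 2) / (s * h / 2)) (𝓝[>] (0:ℝ)) (𝓝 1) :=
      tendsto_sin_div_self.comp (tendsto_scaled hspos)
    have hT2 : Tendsto (fun h : ℝ => Real.cos (s * h)) (𝓝[>] (0:ℝ)) (𝓝 1) := by
      have := (Real.continuous_cos.tendsto 0).comp (tendsto_scaled' hspos)
      simpa [Function.comp_def] using this
    have hT : Tendsto (fun h : ℝ =>
        -(((s / 2) * (Real.sin (s * h / 2) / (s * h / 2))) ^ 2 * 2 / Real.cos (s * h)))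
        (𝓝[>] (0:ℝ)) (𝓝 (-(((s / 2) * 1) ^ 2 * 2 / 1))) :=
      ((((tendsto_const_nhds.mul hT1).pow 2).mul_const 2).div hT2 one_ne_zero).neg
    have hval : -(((s / 2) * 1) ^ 2 * 2 / 1) = -κ / 2 := by
      field_simp
      nlinarith [hs2]
    rw [hval] at hT
    refine hT.congr' ?_
    have hmem : Set.Ioo (0:ℝ) (Real.pi / (2 * s)) ∈ 𝓝[>] (0:ℝ) :=
      Ioo_mem_nhdsGT (by positivity)
    filter_upwards [hmem] with h hh
    obtain ⟨hh0, hhπ⟩ := hh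
    have hsh0 : 0 < s * h := by positivity
    have hshπ : s * h < Real.pi / 2 := by
      rw [lt_div_iff₀ (by norm_num : (0:ℝ) < 2)]
      have := (lt_div_iff₀ (by positivity : (0:ℝ) < 2 * s)).1 hhπ
      nlinarith
    have hsin : 0 < Real.sin (s * h) :=
      Real.sin_pos_of_pos_of_lt_pi hsh0 (by linarith [Real.pi_gt_three])
    have hcos : 0 < Real.cos (s * h) :=
      Real.cos_pos_of_mem_Ioo ⟨by linarith [Real.pi_pos], hshπ⟩
    have nκ1 : ¬ κ < 0 := by linarith
    have nκ2 : ¬ κ = 0 := by linarith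
    have e1 : sinK κ h = Real.sin (s * h) / s := by
      unfold sinK; rw [if_neg nκ1, if_neg nκ2]
    have e2 : sinK κ (2 * h) = 2 * Real.sin (s * h) * Real.cos (s * h) / s := by
      unfold sinK; rw [if_neg nκ1, if_neg nκ2, show s * (2 * h) = 2 * (s * h) by ring,
        Real.sin_two_mul]
    have e3 : Real.cos (s * h) = 1 - 2 * Real.sin (s * h / 2) ^ 2 := by
      rw [show s * h = 2 * (s * h / 2) by ring, Real.cos_two_mul', Real.cos_sq']
      ring
    have hne : s * h / 2 ≠ 0 := by positivity
    have hcos' : (1:ℝ) - 2 * Real.sin (s * h / 2) ^ 2 ≠ 0 := by rw [← e3]; exact hcos.ne'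
    rw [e1, e2, e3]
    field_simp
    ring

set_option maxHeartbeats 1600000 in
/-- If `u` satisfies the κ-concavity inequality on `[a,b]`, then for every twice
differentiable `F` on `(a,b)` with `F'' = -κ u`, the function `u - F` is concave
on `(a,b)`. -/
theorem concave_sub_of_kConcIneq (κ a b : ℝ) (hab : a < b) (u : ℝ → ℝ)
    (hu : KConcIneqOn κ u (Set.Icc a b)) (F F' : ℝ → ℝ)
    (hF : ∀ x ∈ Set.Ioo a b, HasDerivAt F (F' x) x)
    (hF' : ∀ x ∈ Set.Ioo a b, HasDerivAt F' (-κ * u x) x) :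
    ConcaveOn ℝ (Set.Ioo a b) (fun x => u x - F x) := by
  set g : ℝ → ℝ := fun w => u w - F w with hgdef
  have key : ∀ x : ℝ, x ∈ Set.Ioo a b → ∀ y : ℝ, y ∈ Set.Ioo a b → x < y →
      ∀ z ∈ Set.Icc x y, g x + (g y - g x) / (y - x) * (z - x) ≤ g z := by
    intro x hx y hy hxy z hz
    by_contra hcon
    push_neg at hcon
    have hyx : (0:ℝ) < y - x := by linarith
    set m : ℝ := (g y - g x) / (y - x) with hm
    set l : ℝ → ℝ := fun w => g x + m * (w - x) with hldef
    have hlx : l x = g x := by show g x + m * (x - x) = g x; ring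
    have hly : l y = g y := by
      show g x + (g y - g x) / (y - x) * (y - x) = g y
      field_simp
      ring
    have hconz : g z < l z := hcon
    have hzx : x < z := by
      rcases hz.1.eq_or_lt with he | h
      · exfalso
        have : l z = g z := by rw [← he, hlx]
        linarith
      · exact h
    have hzy : z < y := by
      rcases hz.2.eq_or_lt with he | h
      · exfalso
        have : l z = g z := by rw [he, hly]
        linarith
      · exact h
    set q0 : ℝ → ℝ := fun w => (w - x) * (w - y) with hq0def
    have hq0z : q0 z < 0 := mul_neg_of_pos_of_neg (by linarith) (by linarith)
    set ε : ℝ := (g z - l z) / (2 * q0 z) with hεdef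
    have hgzlz : g z - l z < 0 := by linarith
    have hεpos : 0 < ε := div_pos_of_neg_of_neg hgzlz (by linarith)
    set H : ℝ → ℝ := fun w => F w + (l w + ε * q0 w) with hHdef
    set ψ : ℝ → ℝ := fun w => u w - H w with hψdef
    have hgu : ∀ w, g w = u w - F w := fun w => rfl
    have hψx : ψ x = 0 := by
      show u x - (F x + (l x + ε * q0 x)) = 0
      have h1 : l x = g x := hlx
      have h2 : q0 x = 0 := by show (x - x) * (x - y) = 0; ring
      rw [h1, h2, hgu x]; ring
    have hψy : ψ y = 0 := by
      show u y - (F y + (l y + ε * q0 y)) = 0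
      have h2 : q0 y = 0 := by show (y - x) * (y - y) = 0; ring
      rw [hly, h2, hgu y]; ring
    have hq0ne : q0 z ≠ 0 := ne_of_lt hq0z
    have hψz : ψ z < 0 := by
      show u z - (F z + (l z + ε * q0 z)) < 0
      have hεq : ε * q0 z = (g z - l z) / 2 := by
        rw [hεdef, div_mul_eq_mul_div, mul_comm (g z - l z) (q0 z),
          mul_comm (2:ℝ) (q0 z), mul_div_mul_left _ _ hq0ne]
      have h7 : u z - (F z + (l z + ε * q0 z)) = g z - l z - ε * q0 z := by
        rw [hgu z]; ring
      rw [h7, hεq]; linarith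
    have hsubIoo : Set.Icc x y ⊆ Set.Ioo a b := fun w hw =>
      ⟨lt_of_lt_of_le hx.1 hw.1, lt_of_le_of_lt hw.2 hy.2⟩
    have hsubIcc : Set.Icc x y ⊆ Set.Icc a b := fun w hw =>
      ⟨(lt_of_lt_of_le hx.1 hw.1).le, (lt_of_le_of_lt hw.2 hy.2).le⟩
    have hψlsc : ∀ p ∈ Set.Icc x y, LowerSemicontinuousWithinAt ψ (Set.Icc x y) p := by
      intro p hp
      have h1 : LowerSemicontinuousWithinAt u (Set.Icc x y) p :=
        (lsc_aux κ a b u hu (hsubIoo hp)).lowerSemicontinuousWithinAt _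
      have hcont2 : Continuous (fun w => l w + ε * q0 w) := by
        show Continuous (fun w => (g x + m * (w - x)) + ε * ((w - x) * (w - y)))
        fun_prop
      have h2 : ContinuousWithinAt (fun w => -H w) (Set.Icc x y) p := by
        have : ContinuousAt (fun w => -H w) p := by
          show ContinuousAt (fun w => -(F w + (l w + ε * q0 w))) p
          exact ((hF p (hsubIoo hp)).continuousAt.add hcont2.continuousAt).neg
        exact this.continuousWithinAt
      have h3 := h1.add h2.lowerSemicontinuousWithinAt
      show LowerSemicontinuousWithinAt (fun w => u w - H w) (Set.Icc x y) p
      simp only [sub_eq_add_neg]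
      exact h3
    obtain ⟨p, hpmem, hpmin⟩ := exists_min_lsc isCompact_Icc
      ⟨x, Set.left_mem_Icc.2 hxy.le⟩ hψlsc
    have hψp0 : ψ p < 0 := lt_of_le_of_lt (hpmin z ⟨hzx.le, hzy.le⟩) hψz
    have hpx : x < p := by
      rcases hpmem.1.eq_or_lt with he | h
      · exfalso; rw [← he] at hψp0; linarith [hψx]
      · exact h
    have hpy : p < y := by
      rcases hpmem.2.eq_or_lt with he | h
      · exfalso; rw [he] at hψp0; linarith [hψy]
      · exact h
    have hpab : p ∈ Set.Ioo a b := hsubIoo hpmem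
    set L : ℝ := -κ * u p with hLdef
    set H' : ℝ → ℝ := fun w => F' w + (m + ε * (2 * w - x - y)) with hH'def
    set δ₀ : ℝ := min (p - x) (y - p) with hδ₀def
    have hδ₀pos : 0 < δ₀ := lt_min (by linarith) (by linarith)
    have hδ₀x : δ₀ ≤ p - x := min_le_left _ _
    have hδ₀y : δ₀ ≤ y - p := min_le_right _ _
    have hHd : ∀ w ∈ Set.Ioo (p - δ₀) (p + δ₀), HasDerivAt H (H' w) w := by
      intro w hw
      have hwio : w ∈ Set.Ioo a b := hsubIoo ⟨by linarith [hw.1], by linarith [hw.2]⟩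
      have h1 := hF w hwio
      have h2 : HasDerivAt (fun w => l w + ε * q0 w) (m + ε * (2 * w - x - y)) w := by
        show HasDerivAt (fun w => (g x + m * (w - x)) + ε * ((w - x) * (w - y))) _ w
        have hA : HasDerivAt (fun w : ℝ => g x + m * (w - x)) (m * 1) w :=
          (((hasDerivAt_id w).sub_const x).const_mul m).const_add (g x)
        have hB : HasDerivAt (fun w : ℝ => ε * ((w - x) * (w - y)))
            (ε * (1 * (w - y) + (w - x) * 1)) w :=
          (((hasDerivAt_id w).sub_const x).mul ((hasDerivAt_id w).sub_const y)).const_mul ε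
        have := hA.add hB
        refine this.congr_deriv ?_
        ring
      exact h1.add h2
    have hH'd : HasDerivAt H' (L + 2 * ε) p := by
      have h1 := hF' p hpab
      have h2 : HasDerivAt (fun w : ℝ => m + ε * (2 * w - x - y)) (ε * (2 * 1)) p := by
        refine HasDerivAt.const_add m ?_
        simpa using (((hasDerivAt_id p).const_mul 2).sub_const x).sub_const y |>.const_mul ε
      have h3 := h1.add h2
      show HasDerivAt (fun w => F' w + (m + ε * (2 * w - x - y))) (L + 2 * ε) p
      refine h3.congr_deriv ?_
      rw [hLdef]; ring
    have hDlim := secondDiff_tendsto hδ₀pos hHd hH'd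
    clear_value δ₀ H' L ψ H ε q0 l m g
    have hC := tendsto_coeff κ
    have hsq : Tendsto (fun h : ℝ => h ^ 2) (𝓝[>] (0:ℝ)) (𝓝 0) := by
      have : Tendsto (fun h : ℝ => h ^ 2) (𝓝 0) (𝓝 ((0:ℝ) ^ 2)) :=
        (continuous_pow 2).tendsto 0
      simpa using this.mono_left nhdsWithin_le_nhds
    have hC0 : Tendsto (fun h => 1 - 2 * (sinK κ h / sinK κ (2 * h))) (𝓝[>] (0:ℝ)) (𝓝 0) := by
      have h1 := hC.mul hsq
      rw [mul_zero] at h1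
      refine h1.congr' ?_
      filter_upwards [self_mem_nhdsWithin] with h (hh : 0 < h)
      field_simp
    have hc12 : Tendsto (fun h => sinK κ h / sinK κ (2 * h)) (𝓝[>] (0:ℝ)) (𝓝 (1/2)) := by
      have h1 := ((tendsto_const_nhds (x := (1:ℝ))).sub hC0).div_const 2
      rw [sub_zero] at h1
      refine h1.congr fun h => ?_
      ring
    -- the eventual inequality
    set ρ : ℝ := min δ₀ (if hκ : 0 < κ then Real.pi / (2 * Real.sqrt κ) else 1) with hρdef
    have hρpos : 0 < ρ := by
      rw [hρdef]
      refine lt_min hδ₀pos ?_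
      split_ifs with h
      · positivity
      · exact one_pos
    clear_value ρ
    have hQpos : ∀ᶠ h in 𝓝[>] (0:ℝ),
        0 ≤ ((1 - 2 * (sinK κ h / sinK κ (2 * h))) * u p
          - (sinK κ h / sinK κ (2 * h)) * (H (p + h) + H (p - h) - 2 * H p)) / h ^ 2 := by
      filter_upwards [Ioo_mem_nhdsGT hρpos] with h hh
      obtain ⟨hh0, hhρ⟩ := hh
      have hhδ : h < δ₀ := by
        have h0 : ρ ≤ δ₀ := by rw [hρdef]; exact min_le_left _ _
        linarith
      have hπ2 : 0 < κ → 2 * h * Real.sqrt κ < Real.pi := by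
        intro hκ0
        have hs : 0 < Real.sqrt κ := Real.sqrt_pos.2 hκ0
        have h1 : h < Real.pi / (2 * Real.sqrt κ) := by
          have h0 : ρ ≤ (if hκ : 0 < κ then Real.pi / (2 * Real.sqrt κ) else 1) := by
            rw [hρdef]; exact min_le_right _ _
          rw [dif_pos hκ0] at h0
          linarith
        have h2 := (lt_div_iff₀ (by positivity : (0:ℝ) < 2 * Real.sqrt κ)).1 h1
        nlinarith
      have hπ1 : 0 < κ → h * Real.sqrt κ < Real.pi := by
        intro hκ0
        have hs : Real.sqrt κ ≥ 0 := Real.sqrt_nonneg κ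
        have := hπ2 hκ0
        nlinarith
      have hmem₁ : p - h ∈ Set.Icc x y := ⟨by linarith, by linarith⟩
      have hmem₂ : p + h ∈ Set.Icc x y := ⟨by linarith, by linarith⟩
      have hkey := hu (p - h) (hsubIcc hmem₁) (p + h) (hsubIcc hmem₂)
        (by linarith : (0:ℝ) < p + h - (p - h))
        (by intro hκ0; rw [show p + h - (p - h) = 2 * h by ring]; exact hπ2 hκ0)
        (1/2) ⟨by norm_num, by norm_num⟩
      rw [show (1 - (1:ℝ)/2) * (p - h) + (1/2) * (p + h) = p by ring,
        show (1 - (1:ℝ)/2) * (p + h - (p - h)) = h by ring,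
        show ((1:ℝ)/2) * (p + h - (p - h)) = h by ring,
        show p + h - (p - h) = 2 * h by ring] at hkey
      have hc0 : 0 < sinK κ h / sinK κ (2 * h) :=
        div_pos (sinK_pos κ hh0 hπ1)
          (sinK_pos κ (by linarith) (by intro hκ0; exact hπ2 hκ0))
      obtain ⟨c, hcdefn⟩ : ∃ c : ℝ, c = sinK κ h / sinK κ (2 * h) := ⟨_, rfl⟩
      rw [← hcdefn] at hkey hc0 ⊢
      have hmin₁ : u p - H p ≤ u (p - h) - H (p - h) := by
        have := hpmin (p - h) hmem₁
        simpa only [hψdef] using this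
      have hmin₂ : u p - H p ≤ u (p + h) - H (p + h) := by
        have := hpmin (p + h) hmem₂
        simpa only [hψdef] using this
      have k1 : c * (u p + (H (p - h) - H p)) ≤ c * u (p - h) :=
        mul_le_mul_of_nonneg_left (by linarith) hc0.le
      have k2 : c * (u p + (H (p + h) - H p)) ≤ c * u (p + h) :=
        mul_le_mul_of_nonneg_left (by linarith) hc0.le
      have hnum : 0 ≤ (1 - 2 * c) * u p - c * (H (p + h) + H (p - h) - 2 * H p) := by
        nlinarith [hkey, k1, k2]
      exact div_nonneg hnum (by positivity)
    have hDlim' : Tendsto (fun h => (H (p + h) + H (p - h) - 2 * H p) / h ^ 2)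
        (𝓝[>] (0:ℝ)) (𝓝 (L + 2 * ε)) := by
      have h1 := hDlim.add (tendsto_const_nhds (x := L + 2 * ε))
      rw [zero_add] at h1
      refine h1.congr' ?_
      filter_upwards [self_mem_nhdsWithin] with h (hh : 0 < h)
      have hne : (h:ℝ) ^ 2 ≠ 0 := by positivity
      field_simp
      ring
    have hQlim : Tendsto (fun h => ((1 - 2 * (sinK κ h / sinK κ (2 * h))) * u p
        - (sinK κ h / sinK κ (2 * h)) * (H (p + h) + H (p - h) - 2 * H p)) / h ^ 2)
        (𝓝[>] (0:ℝ)) (𝓝 (-ε)) := by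
      have hmain := (hC.mul (tendsto_const_nhds (x := u p))).sub (hc12.mul hDlim')
      have hvv : (-κ / 2) * u p - (1/2) * (L + 2 * ε) = -ε := by rw [hLdef]; ring
      rw [hvv] at hmain
      refine hmain.congr fun h => ?_
      ring
    have hfinal : (0:ℝ) ≤ -ε := ge_of_tendsto hQlim hQpos
    linarith
  refine ⟨convex_Ioo a b, ?_⟩
  intro x hx y hy sa tb hsa htb hst
  simp only [smul_eq_mul]
  rcases lt_trichotomy x y with hxy | heq | hxy
  · have hs' : sa = 1 - tb := by linarith
    have ea : sa * x + tb * y - x = tb * (y - x) := by rw [hs']; ring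
    have eb : y - (sa * x + tb * y) = sa * (y - x) := by rw [hs']; ring
    have hz : sa * x + tb * y ∈ Set.Icc x y := by
      constructor
      · linarith [mul_nonneg htb (by linarith : (0:ℝ) ≤ y - x)]
      · linarith [mul_nonneg hsa (by linarith : (0:ℝ) ≤ y - x)]
    have h1 := key x hx y hy hxy _ hz
    have hne : y - x ≠ 0 := ne_of_gt (by linarith : (0:ℝ) < y - x)
    have h2 : g x + (g y - g x) / (y - x) * ((sa * x + tb * y) - x) = sa * g x + tb * g y := by
      rw [hs', show ((1 - tb) * x + tb * y) - x = tb * (y - x) by ring]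
      have e2 : (g y - g x) / (y - x) * (tb * (y - x)) = tb * (g y - g x) := by
        field_simp [hne]
      rw [e2]
      ring
    show sa * g x + tb * g y ≤ g (sa * x + tb * y)
    rw [← h2]; exact h1
  · subst heq
    have h1 : sa * x + tb * x = x := by rw [← add_mul, hst, one_mul]
    show sa * g x + tb * g x ≤ g (sa * x + tb * x)
    rw [h1, ← add_mul, hst, one_mul]
  · have ht' : tb = 1 - sa := by linarith
    have ea : sa * x + tb * y - y = sa * (x - y) := by rw [ht']; ring
    have eb : x - (sa * x + tb * y) = tb * (x - y) := by rw [ht']; ring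
    have hz : sa * x + tb * y ∈ Set.Icc y x := by
      constructor
      · linarith [mul_nonneg hsa (by linarith : (0:ℝ) ≤ x - y)]
      · linarith [mul_nonneg htb (by linarith : (0:ℝ) ≤ x - y)]
    have h1 := key y hy x hx hxy _ hz
    have hne : x - y ≠ 0 := ne_of_gt (by linarith : (0:ℝ) < x - y)
    have h2 : g y + (g x - g y) / (x - y) * ((sa * x + tb * y) - y) = sa * g x + tb * g y := by
      rw [ht', show (sa * x + (1 - sa) * y) - y = sa * (x - y) by ring]
      have e2 : (g x - g y) / (x - y) * (sa * (x - y)) = sa * (g x - g y) := by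
        field_simp [hne]
      rw [e2]
      ring
    show sa * g x + tb * g y ≤ g (sa * x + tb * y)
    rw [← h2]; exact h1
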